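/- arXiv:2502.05631 — 3 statements merged into one kernel-verified Lean document; each statement's English description precedes it below -/
import Mathlib

section
/- Let X be a set, I and J finite index sets, and ξ a finitely supported probability distribution on X. Suppose ξ = ⊕_{i∈I} p_i · μ_i and ξ = ⊕_{j∈J} q_j · ν_j are two convex decompositions of ξ into distributions μ_i, ν_j with weights p_i, q_j ∈ [0,1] summing to 1. Then there exist r_{ij} ∈ [0,1] and distributions ϱ_{ij} on X such that ∑_{i∈I} r_{ij} = q_j for all j, ∑_{j∈J} r_{ij} = p_i for all i, p_i · μ_i = ⊕_{j∈J} r_{ij} · ϱ_{ij} for all i, and q_j · ν_j = ⊕_{i∈I} r_{ij} · ϱ_{ij} for all j. -/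
open scoped BigOperators
open Classical

namespace PBB

structure Distr (X : Type) where
  f : X → ℝ
  nonneg : ∀ x, 0 ≤ f x
  fin : (Function.support f).Finite
  sum_one : ∑ᶠ x, f x = 1

namespace Distr

variable {X : Type}

noncomputable def dirac (E : X) : Distr X where
  f := fun x => if x = E then 1 else 0
  nonneg := fun x => by by_cases h : x = E <;> simp [h]
  fin := Set.Finite.subset (Set.finite_singleton E) (by
    intro x hx
    simp only [Function.mem_support] at hx
    by_contra h
    simp only [Set.mem_singleton_iff] at h
    simp [h] at hx)
  sum_one := by
    rw [finsum_eq_single _ E (by intro x hx; simp [hx])]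
    simp

noncomputable def mix (r : ℝ) (h0 : 0 ≤ r) (h1 : r ≤ 1) (μ ν : Distr X) : Distr X where
  f := fun x => r * μ.f x + (1 - r) * ν.f x
  nonneg := fun x =>
    add_nonneg (mul_nonneg h0 (μ.nonneg x)) (mul_nonneg (by linarith) (ν.nonneg x))
  fin := Set.Finite.subset (μ.fin.union ν.fin) (by
    intro x hx
    simp only [Function.mem_support] at hx
    by_contra h
    simp only [Set.mem_union, Function.mem_support, not_or, not_not] at h
    simp [h.1, h.2] at hx)
  sum_one := by
    have hf : (Function.support fun x => r * μ.f x).Finite :=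
      Set.Finite.subset μ.fin (by
        intro x hx
        simp only [Function.mem_support] at hx ⊢
        intro h; simp [h] at hx)
    have hg : (Function.support fun x => (1 - r) * ν.f x).Finite :=
      Set.Finite.subset ν.fin (by
        intro x hx
        simp only [Function.mem_support] at hx ⊢
        intro h; simp [h] at hx)
    rw [finsum_add_distrib hf hg, ← mul_finsum _ _, ← mul_finsum _ _,
      μ.sum_one, ν.sum_one]
    ring

end Distr

def IsMix {X : Type} (r : ℝ) (μ ν ξ : Distr X) : Prop :=
  ∀ x, ξ.f x = r * μ.f x + (1 - r) * ν.f x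

def IsCombo {X I : Type} [Fintype I] (p : I → ℝ) (μs : I → Distr X) (ξ : Distr X) : Prop :=
  (∀ i, 0 ≤ p i) ∧ (∑ i, p i = 1) ∧ ∀ x, ξ.f x = ∑ i, p i * (μs i).f x



noncomputable def normalize {X : Type} (h : X → ℝ) (s : Finset X)
    (hnn : ∀ x, 0 ≤ h x) (hsub : Function.support h ⊆ ↑s)
    (hc : ∑ x ∈ s, h x ≠ 0) : Distr X where
  f := fun x => h x / (∑ y ∈ s, h y)
  nonneg := fun x => div_nonneg (hnn x) (Finset.sum_nonneg fun y _ => hnn y)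
  fin := Set.Finite.subset s.finite_toSet (by
    intro x hx
    simp only [Function.mem_support] at hx
    apply hsub
    simp only [Function.mem_support]
    intro h0
    simp [h0] at hx)
  sum_one := by
    have hsub' : Function.support (fun x => h x / (∑ y ∈ s, h y)) ⊆ ↑s := by
      intro x hx
      simp only [Function.mem_support] at hx
      apply hsub
      simp only [Function.mem_support]
      intro h0
      simp [h0] at hx
    rw [finsum_eq_finset_sum_of_support_subset _ hsub', ← Finset.sum_div, div_self hc]

/-- Two convex decompositions of a distribution admit a common refinement. -/
theorem statement0 {X I J : Type} [Fintype I] [Fintype J]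
    (ξ : Distr X) (p : I → ℝ) (q : J → ℝ) (μ : I → Distr X) (ν : J → Distr X)
    (h1 : IsCombo p μ ξ) (h2 : IsCombo q ν ξ) :
    ∃ (r : I → J → ℝ) (ϱ : I → J → Distr X),
      (∀ i j, 0 ≤ r i j ∧ r i j ≤ 1) ∧
      (∀ j, ∑ i, r i j = q j) ∧
      (∀ i, ∑ j, r i j = p i) ∧
      (∀ i x, p i * (μ i).f x = ∑ j, r i j * (ϱ i j).f x) ∧
      (∀ j x, q j * (ν j).f x = ∑ i, r i j * (ϱ i j).f x) := by
  classical
  obtain ⟨hp0, hp1, hpx⟩ := h1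
  obtain ⟨hq0, hq1, hqx⟩ := h2
  -- there is a point with positive mass
  have hx0 : ∃ x, ξ.f x ≠ 0 := by
    by_contra h
    push_neg at h
    have h0 : ∑ᶠ x, ξ.f x = 0 := by
      have : ξ.f = fun _ => 0 := funext h
      rw [this]; simp
    rw [ξ.sum_one] at h0; norm_num at h0
  obtain ⟨x₀, hx₀⟩ := hx0
  set S : Finset X := ξ.fin.toFinset with hS
  have hmemS : ∀ x, x ∈ S ↔ ξ.f x ≠ 0 := by
    intro x; simp [hS, Set.Finite.mem_toFinset, Function.mem_support]
  set g : I → J → X → ℝ := fun i j x =>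
    if ξ.f x = 0 then 0 else (p i * (μ i).f x) * (q j * (ν j).f x) / ξ.f x with hgdef
  have hgnn : ∀ i j x, 0 ≤ g i j x := by
    intro i j x
    simp only [hgdef]
    split
    · exact le_refl 0
    · exact div_nonneg (mul_nonneg (mul_nonneg (hp0 i) ((μ i).nonneg x))
        (mul_nonneg (hq0 j) ((ν j).nonneg x))) (ξ.nonneg x)
  have hμ0 : ∀ x, ξ.f x = 0 → ∀ i, p i * (μ i).f x = 0 := by
    intro x hx i
    have h := hpx x
    rw [hx] at h
    exact (Finset.sum_eq_zero_iff_of_nonneg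
      (fun i _ => mul_nonneg (hp0 i) ((μ i).nonneg x))).mp h.symm i (Finset.mem_univ i)
  have hν0 : ∀ x, ξ.f x = 0 → ∀ j, q j * (ν j).f x = 0 := by
    intro x hx j
    have h := hqx x
    rw [hx] at h
    exact (Finset.sum_eq_zero_iff_of_nonneg
      (fun j _ => mul_nonneg (hq0 j) ((ν j).nonneg x))).mp h.symm j (Finset.mem_univ j)
  have hsumj : ∀ i x, ∑ j, g i j x = p i * (μ i).f x := by
    intro i x
    by_cases hx : ξ.f x = 0
    · simp [hgdef, hx, hμ0 x hx i]
    · simp only [hgdef, hx, if_neg, ite_false]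
      rw [← Finset.sum_div, ← Finset.mul_sum, ← hqx x, mul_div_assoc, div_self hx, mul_one]
  have hsumi : ∀ j x, ∑ i, g i j x = q j * (ν j).f x := by
    intro j x
    by_cases hx : ξ.f x = 0
    · simp [hgdef, hx, hν0 x hx j]
    · simp only [hgdef, hx, if_neg, ite_false]
      have : ∀ i, (p i * (μ i).f x) * (q j * (ν j).f x) / ξ.f x
          = (q j * (ν j).f x) * (p i * (μ i).f x) / ξ.f x := by intro i; ring
      simp only [this]
      rw [← Finset.sum_div, ← Finset.mul_sum, ← hpx x, mul_div_assoc, div_self hx, mul_one]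
  -- support of g lies in S
  have hgsupp : ∀ i j, Function.support (g i j) ⊆ ↑S := by
    intro i j x hx
    simp only [Function.mem_support] at hx
    rw [Finset.mem_coe, hmemS]
    intro h0
    simp [hgdef, h0] at hx
  set r : I → J → ℝ := fun i j => ∑ x ∈ S, g i j x with hrdef
  have hrnn : ∀ i j, 0 ≤ r i j := fun i j =>
    Finset.sum_nonneg fun x _ => hgnn i j x
  -- sums over S of μ/ν when weights positive
  have hμsum : ∀ i, p i ≠ 0 → ∑ x ∈ S, (μ i).f x = 1 := by
    intro i hpi
    rw [← (μ i).sum_one]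
    symm
    apply finsum_eq_finset_sum_of_support_subset
    intro x hx
    simp only [Function.mem_support] at hx
    rw [Finset.mem_coe, hmemS]
    intro h0
    have := hμ0 x h0 i
    rcases mul_eq_zero.mp this with h | h
    · exact hpi h
    · exact hx h
  have hνsum : ∀ j, q j ≠ 0 → ∑ x ∈ S, (ν j).f x = 1 := by
    intro j hqj
    rw [← (ν j).sum_one]
    symm
    apply finsum_eq_finset_sum_of_support_subset
    intro x hx
    simp only [Function.mem_support] at hx
    rw [Finset.mem_coe, hmemS]
    intro h0
    have := hν0 x h0 j
    rcases mul_eq_zero.mp this with h | h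
    · exact hqj h
    · exact hx h
  have hrow : ∀ i, ∑ j, r i j = p i := by
    intro i
    rw [hrdef]
    rw [Finset.sum_comm]
    simp only [hsumj]
    by_cases hpi : p i = 0
    · simp [hpi]
    · rw [← Finset.mul_sum, hμsum i hpi, mul_one]
  have hcol : ∀ j, ∑ i, r i j = q j := by
    intro j
    rw [hrdef]
    rw [Finset.sum_comm]
    simp only [hsumi]
    by_cases hqj : q j = 0
    · simp [hqj]
    · rw [← Finset.mul_sum, hνsum j hqj, mul_one]
  -- if r i j = 0 then g i j x = 0 everywhere
  have hg0 : ∀ i j, r i j = 0 → ∀ x, g i j x = 0 := by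
    intro i j hr x
    by_cases hxS : x ∈ S
    · exact (Finset.sum_eq_zero_iff_of_nonneg (fun y _ => hgnn i j y)).mp hr x hxS
    · have : ξ.f x = 0 := by
        by_contra h
        exact hxS ((hmemS x).mpr h)
      simp [hgdef, this]
  set ϱ : I → J → Distr X := fun i j =>
    if h : r i j = 0 then Distr.dirac x₀
    else normalize (g i j) S (hgnn i j) (hgsupp i j) h with hϱdef
  have hkey : ∀ i j x, r i j * (ϱ i j).f x = g i j x := by
    intro i j x
    simp only [hϱdef]
    by_cases h : r i j = 0
    · rw [dif_pos h, h, zero_mul, hg0 i j h x]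
    · rw [dif_neg h]
      simp only [normalize]
      have hr : ∑ y ∈ S, g i j y = r i j := rfl
      rw [hr, mul_div_cancel₀ _ h]
  refine ⟨r, ϱ, ?_, hcol, hrow, ?_, ?_⟩
  · intro i j
    refine ⟨hrnn i j, ?_⟩
    have h1 : r i j ≤ ∑ j', r i j' :=
      Finset.single_le_sum (fun j' _ => hrnn i j') (Finset.mem_univ j)
    have h2 : p i ≤ ∑ i', p i' :=
      Finset.single_le_sum (fun i' _ => hp0 i') (Finset.mem_univ i)
    rw [hrow i] at h1
    rw [hp1] at h2
    linarith
  · intro i x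
    rw [← hsumj i x]
    exact Finset.sum_congr rfl fun j _ => (hkey i j x).symm
  · intro j x
    rw [← hsumi j x]
    exact Finset.sum_congr rfl fun i _ => (hkey i j x).symm

end PBB
end

section
/- For nondeterministic processes in the minimal process language, rooted branching bisimilarity is a congruence for action prefix and nondeterministic choice: if E₁ ≈_rb F₁ and E₂ ≈_rb F₂ then α.E₁ ≈_rb α.F₁ and E₁ + E₂ ≈_rb F₁ + F₂. -/
namespace NDB

/-- The minimal process language `E ::= 0 | α.E | E + E`. -/
inductive NE (Act : Type) : Type where
  | zero : NE Act
  | pre : Act → NE Act → NE Act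
  | plus : NE Act → NE Act → NE Act

variable {Act : Type}

/-- The SOS transition relation. -/
inductive step : NE Act → Act → NE Act → Prop where
  | pre (α : Act) (E : NE Act) : step (.pre α E) α E
  | left {E₁ E₂ : NE Act} {α : Act} {E' : NE Act} :
      step E₁ α E' → step (.plus E₁ E₂) α E'
  | right {E₁ E₂ : NE Act} {α : Act} {E' : NE Act} :
      step E₂ α E' → step (.plus E₁ E₂) α E'

variable (τ : Act)

/-- `E →(α) E'` : a transition, or a vacuous step when `α = τ`. -/
def opt (E : NE Act) (α : Act) (E' : NE Act) : Prop :=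
  step E α E' ∨ (α = τ ∧ E' = E)

/-- `E ⟹ E'` : the reflexive-transitive closure of `→(τ)`. -/
def wk : NE Act → NE Act → Prop :=
  Relation.ReflTransGen (fun E E' => opt τ E τ E')

/-- Branching bisimulation relations. -/
def IsBB (R : NE Act → NE Act → Prop) : Prop :=
  Symmetric R ∧ ∀ E F α E', R E F → step E α E' →
    ∃ F₁ F₂, wk τ F F₁ ∧ opt τ F₁ α F₂ ∧ R E F₁ ∧ R E' F₂

/-- Branching bisimilarity `≈_b`. -/
def bb (E F : NE Act) : Prop := ∃ R, IsBB τ R ∧ R E F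

/-- Rooted branching bisimilarity `≈_rb`. -/
def rbb (E F : NE Act) : Prop :=
  (∀ α E', step E α E' → ∃ F', step F α F' ∧ bb τ E' F') ∧
  (∀ α F', step F α F' → ∃ E', step E α E' ∧ bb τ E' F')

/-- Strong bisimulation relations. -/
def IsSB (R : NE Act → NE Act → Prop) : Prop :=
  Symmetric R ∧ ∀ E F α E', R E F → step E α E' →
    ∃ F', step F α F' ∧ R E' F'

/-- Strong bisimilarity `∼`. -/
def sb (E F : NE Act) : Prop := ∃ R, IsSB R ∧ R E F

/-- `reach E E'` : `E'` is a derivative of `E`. -/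
def reach : NE Act → NE Act → Prop :=
  Relation.ReflTransGen (fun E E' => ∃ α, step E α E')

/-- A process is concrete iff no derivative has an inert `τ`-transition. -/
def Concrete (E : NE Act) : Prop :=
  ∀ E', reach E E' → ∀ E'', step E' τ E'' → ¬ bb τ E' E''

/-- Provable equality in the theory `AX^b` (axioms A1–A4 and B). -/
inductive AXb (τ : Act) : NE Act → NE Act → Prop where
  | refl (E) : AXb τ E E
  | symm {E F} : AXb τ E F → AXb τ F E
  | trans {E F G} : AXb τ E F → AXb τ F G → AXb τ E G
  | congPre (α : Act) {E F} : AXb τ E F → AXb τ (.pre α E) (.pre α F)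
  | congPlusL {E E' F} : AXb τ E E' → AXb τ (.plus E F) (.plus E' F)
  | congPlusR {E F F'} : AXb τ F F' → AXb τ (.plus E F) (.plus E F')
  | A1 (E F) : AXb τ (.plus E F) (.plus F E)
  | A2 (E F G) : AXb τ (.plus (.plus E F) G) (.plus E (.plus F G))
  | A3 (E) : AXb τ (.plus E E) E
  | A4 (E) : AXb τ (.plus E .zero) E
  | B (α : Act) (E F) :
      AXb τ (.pre α (.plus F (.pre τ (.plus E F)))) (.pre α (.plus E F))



lemma bb_isBB : IsBB τ (bb τ) := by
  constructor
  · rintro E F ⟨R, hR, h⟩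
    exact ⟨R, hR, hR.1 h⟩
  · rintro E F α E' ⟨R, hR, h⟩ hs
    obtain ⟨G₁, G₂, hw, ho, ha, hb⟩ := hR.2 E F α E' h hs
    exact ⟨G₁, G₂, hw, ho, ⟨R, hR, ha⟩, ⟨R, hR, hb⟩⟩

lemma bb_of_rbb {E F : NE Act} (h : rbb τ E F) : bb τ E F := by
  refine ⟨fun X Y => bb τ X Y ∨ (X = E ∧ Y = F) ∨ (X = F ∧ Y = E), ⟨?_, ?_⟩, ?_⟩
  · rintro X Y (hb | ⟨rfl, rfl⟩ | ⟨rfl, rfl⟩)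
    · exact Or.inl ((bb_isBB τ).1 hb)
    · exact Or.inr (Or.inr ⟨rfl, rfl⟩)
    · exact Or.inr (Or.inl ⟨rfl, rfl⟩)
  · rintro X Y α X' (hb | ⟨rfl, rfl⟩ | ⟨rfl, rfl⟩) hs
    · obtain ⟨G₁, G₂, hw, ho, ha, hb'⟩ := (bb_isBB τ).2 X Y α X' hb hs
      exact ⟨G₁, G₂, hw, ho, Or.inl ha, Or.inl hb'⟩
    · obtain ⟨F', hF, hb⟩ := h.1 α X' hs
      exact ⟨Y, F', Relation.ReflTransGen.refl, Or.inl hF,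
        Or.inr (Or.inl ⟨rfl, rfl⟩), Or.inl hb⟩
    · obtain ⟨E', hE, hb⟩ := h.2 α X' hs
      exact ⟨Y, E', Relation.ReflTransGen.refl, Or.inl hE,
        Or.inr (Or.inr ⟨rfl, rfl⟩), Or.inl ((bb_isBB τ).1 hb)⟩
  · exact Or.inr (Or.inl ⟨rfl, rfl⟩)

/-- Rooted branching bisimilarity is a congruence for prefix and choice. -/
theorem statement8 {Act : Type} (τ : Act) {E₁ E₂ F₁ F₂ : NE Act}
    (h1 : rbb τ E₁ F₁) (h2 : rbb τ E₂ F₂) :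
    (∀ α : Act, rbb τ (.pre α E₁) (.pre α F₁)) ∧
    rbb τ (.plus E₁ E₂) (.plus F₁ F₂) := by
  constructor
  · intro α
    constructor
    · intro β E' hs
      cases hs
      exact ⟨F₁, .pre α F₁, bb_of_rbb τ h1⟩
    · intro β F' hs
      cases hs
      exact ⟨E₁, .pre α E₁, bb_of_rbb τ h1⟩
  · constructor
    · intro α E' hs
      cases hs with
      | left h =>
        obtain ⟨F', hF, hb⟩ := h1.1 α E' h
        exact ⟨F', .left hF, hb⟩
      | right h =>
        obtain ⟨F', hF, hb⟩ := h2.1 α E' h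
        exact ⟨F', .right hF, hb⟩
    · intro α F' hs
      cases hs with
      | left h =>
        obtain ⟨E', hE, hb⟩ := h1.2 α F' h
        exact ⟨E', .left hE, hb⟩
      | right h =>
        obtain ⟨E', hE, hb⟩ := h2.2 α F' h
        exact ⟨E', .right hE, hb⟩

end NDB
end

section
/- For nondeterministic processes without inert τ-transitions (concrete processes), branching bisimilarity implies strong bisimilarity: if Ē and F̄ are concrete and Ē ≈_b F̄, then Ē ∼ F̄. -/
namespace NDB

variable {Act : Type}

variable (τ : Act)

section Aux

variable {Act : Type} (τ : Act)

theorem bb_refl (E : NE Act) : bb τ E E := by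
  refine ⟨Eq, ⟨fun _ _ h => h.symm, ?_⟩, rfl⟩
  rintro E F α E' heq hs
  subst heq
  exact ⟨_, E', Relation.ReflTransGen.refl, Or.inl hs, rfl, rfl⟩

theorem bb_symm {E F : NE Act} (h : bb τ E F) : bb τ F E := by
  obtain ⟨R, hR, hEF⟩ := h
  exact ⟨R, hR, hR.1 hEF⟩

/-- `wk`-matching for a fixed branching bisimulation. -/
theorem isBB_wk {R : NE Act → NE Act → Prop} (hR : IsBB τ R) {E F E₁ : NE Act}
    (hEF : R E F) (hw : wk τ E E₁) : ∃ F₁, wk τ F F₁ ∧ R E₁ F₁ := by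
  induction hw with
  | refl => exact ⟨F, Relation.ReflTransGen.refl, hEF⟩
  | tail _hw hstep ih =>
    obtain ⟨F₁, hwF, hRF⟩ := ih
    rcases hstep with hs | ⟨_, rfl⟩
    · obtain ⟨G₁, G₂, hwG, hoG, _hR1, hR2⟩ := hR.2 _ _ _ _ hRF hs
      exact ⟨G₂, (hwF.trans hwG).tail hoG, hR2⟩
    · exact ⟨F₁, hwF, hRF⟩

theorem bb_wk {E F E₁ : NE Act} (hEF : bb τ E F) (hw : wk τ E E₁) :
    ∃ F₁, wk τ F F₁ ∧ bb τ E₁ F₁ := by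
  obtain ⟨R, hR, hREF⟩ := hEF
  obtain ⟨F₁, hwF, hRF⟩ := isBB_wk τ hR hREF hw
  exact ⟨F₁, hwF, R, hR, hRF⟩

theorem bb_step {E F α E'} (hEF : bb τ E F) (hs : step E α E') :
    ∃ F₁ F₂, wk τ F F₁ ∧ opt τ F₁ α F₂ ∧ bb τ E F₁ ∧ bb τ E' F₂ := by
  obtain ⟨R, hR, hREF⟩ := hEF
  obtain ⟨F₁, F₂, hw, ho, h1, h2⟩ := hR.2 _ _ _ _ hREF hs
  exact ⟨F₁, F₂, hw, ho, ⟨R, hR, h1⟩, ⟨R, hR, h2⟩⟩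

/-- One-sided transfer for the composition of two branching bisimulations. -/
theorem comp_transfer {R₁ R₂ : NE Act → NE Act → Prop}
    (h₁ : IsBB τ R₁) (h₂ : IsBB τ R₂) {E F G α E'}
    (hEF : R₁ E F) (hFG : R₂ F G) (hs : step E α E') :
    ∃ G₁ G₂, wk τ G G₁ ∧ opt τ G₁ α G₂ ∧
      (∃ Y, R₁ E Y ∧ R₂ Y G₁) ∧ (∃ Y, R₁ E' Y ∧ R₂ Y G₂) := by
  obtain ⟨F₁, F₂, hwF, hoF, hR1, hR2⟩ := h₁.2 _ _ _ _ hEF hs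
  obtain ⟨G₁, hwG, hRG⟩ := isBB_wk τ h₂ hFG hwF
  rcases hoF with hsF | ⟨heq, heq2⟩
  · obtain ⟨G₁', G₂, hwG', hoG, hRG', hRG₂⟩ := h₂.2 _ _ _ _ hRG hsF
    exact ⟨G₁', G₂, hwG.trans hwG', hoG, ⟨F₁, hR1, hRG'⟩, ⟨F₂, hR2, hRG₂⟩⟩
  · rw [heq2] at hR2
    exact ⟨G₁, G₁, hwG, Or.inr ⟨heq, rfl⟩, ⟨F₁, hR1, hRG⟩, ⟨F₁, hR2, hRG⟩⟩

theorem bb_trans {E F G : NE Act} (h1 : bb τ E F) (h2 : bb τ F G) : bb τ E G := by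
  obtain ⟨R₁, hR₁, hEF⟩ := h1
  obtain ⟨R₂, hR₂, hFG⟩ := h2
  refine ⟨fun X Z => (∃ Y, R₁ X Y ∧ R₂ Y Z) ∨ (∃ Y, R₂ X Y ∧ R₁ Y Z),
    ⟨?_, ?_⟩, Or.inl ⟨F, hEF, hFG⟩⟩
  · rintro X Z (⟨Y, ha, hb⟩ | ⟨Y, ha, hb⟩)
    · exact Or.inr ⟨Y, hR₂.1 hb, hR₁.1 ha⟩
    · exact Or.inl ⟨Y, hR₁.1 hb, hR₂.1 ha⟩
  · rintro X Z α X' (⟨Y, ha, hb⟩ | ⟨Y, ha, hb⟩) hs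
    · obtain ⟨G₁, G₂, hw, ho, hc, hd⟩ := comp_transfer τ hR₁ hR₂ ha hb hs
      exact ⟨G₁, G₂, hw, ho, Or.inl hc, Or.inl hd⟩
    · obtain ⟨G₁, G₂, hw, ho, hc, hd⟩ := comp_transfer τ hR₂ hR₁ ha hb hs
      exact ⟨G₁, G₂, hw, ho, Or.inr hc, Or.inr hd⟩

/-- The stuttering lemma: intermediate states of an inert `τ`-chain are
branching bisimilar to the endpoints. -/
theorem stuttering {P Q G : NE Act} (hPQ : bb τ P Q)
    (h1 : wk τ P G) (h2 : wk τ G Q) : bb τ P G := by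
  set Int : NE Act → Prop := fun X => wk τ P X ∧ wk τ X Q with hInt
  refine ⟨fun X Y => bb τ X Y ∨ (Int X ∧ bb τ P Y) ∨ (Int Y ∧ bb τ P X),
    ⟨?_, ?_⟩, Or.inr (Or.inr ⟨⟨h1, h2⟩, bb_refl τ P⟩)⟩
  · rintro X Y (h | ⟨hi, hb⟩ | ⟨hi, hb⟩)
    · exact Or.inl (bb_symm τ h)
    · exact Or.inr (Or.inr ⟨hi, hb⟩)
    · exact Or.inr (Or.inl ⟨hi, hb⟩)
  · rintro X Y α X' (h | ⟨hi, hb⟩ | ⟨hi, hb⟩) hs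
    · obtain ⟨Y₁, Y₂, hw, ho, ha, hb⟩ := bb_step τ h hs
      exact ⟨Y₁, Y₂, hw, ho, Or.inl ha, Or.inl hb⟩
    · -- X intermediate, bb P Y, X →α X'
      obtain ⟨Y₁, hwY, hbY⟩ := bb_wk τ hb hi.1
      obtain ⟨Y₁', Y₂, hwY', ho, ha, hb'⟩ := bb_step τ hbY hs
      exact ⟨Y₁', Y₂, hwY.trans hwY', ho, Or.inl ha, Or.inl hb'⟩
    · -- Y intermediate, bb P X, X →α X'
      have hXQ : bb τ X Q := bb_trans τ (bb_symm τ hb) hPQ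
      obtain ⟨Q₁, Q₂, hwQ, ho, ha, hb'⟩ := bb_step τ hXQ hs
      exact ⟨Q₁, Q₂, hi.2.trans hwQ, ho, Or.inl ha, Or.inl hb'⟩

theorem concrete_step {E α E'} (hE : Concrete τ E) (hs : step E α E') :
    Concrete τ E' := fun X hX X' hs' hb =>
  hE X (Relation.ReflTransGen.head ⟨α, hs⟩ hX) X' hs' hb

/-- A concrete process has no nontrivial inert `τ`-chain to a branching
bisimilar process. -/
theorem chain_collapse {F F₁ : NE Act} (hF : Concrete τ F)
    (hb : bb τ F F₁) (hw : wk τ F F₁) : F₁ = F := by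
  suffices h : ∀ X, wk τ F X → wk τ X F₁ → X = F from
    h F₁ hw Relation.ReflTransGen.refl
  intro X hFX
  induction hFX with
  | refl => intro _; rfl
  | @tail Y X hFY hYX ih =>
    intro hXF₁
    have hYF₁ : wk τ Y F₁ := Relation.ReflTransGen.head hYX hXF₁
    have hYF : Y = F := ih hYF₁
    rcases hYX with hs | ⟨_, h⟩
    · rw [hYF] at hs
      exact absurd (stuttering τ hb (Relation.ReflTransGen.single (Or.inl hs)) hXF₁)
        (hF F Relation.ReflTransGen.refl X hs)
    · rw [h, hYF]

end Aux

/-- For concrete processes, branching bisimilarity implies strong bisimilarity. -/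
theorem statement9 {Act : Type} (τ : Act) {E F : NE Act}
    (hE : Concrete τ E) (hF : Concrete τ F) (h : bb τ E F) :
    sb E F := by
  refine ⟨fun X Y => Concrete τ X ∧ Concrete τ Y ∧ bb τ X Y, ⟨?_, ?_⟩, hE, hF, h⟩
  · rintro X Y ⟨hX, hY, hb⟩
    exact ⟨hY, hX, bb_symm τ hb⟩
  · rintro X Y α X' ⟨hX, hY, hb⟩ hs
    obtain ⟨Y₁, Y₂, hw, ho, hb1, hb2⟩ := bb_step τ hb hs
    have hYY₁ : bb τ Y Y₁ := bb_trans τ (bb_symm τ hb) hb1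
    have hY₁ : Y₁ = Y := chain_collapse τ hY hYY₁ hw
    subst hY₁
    rcases ho with hsY | ⟨heq, h2⟩
    · exact ⟨Y₂, hsY, concrete_step τ hX hs, concrete_step τ hY hsY, hb2⟩
    · rw [heq] at hs
      rw [h2] at hb2
      exact absurd (bb_trans τ hb (bb_symm τ hb2))
        (hX X Relation.ReflTransGen.refl X' hs)

end NDB
end
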